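/- Let $f:\mathbb{R}^d\to\mathbb{R}$ be differentiable, $\mu$-strongly convex, and have $L$-Lipschitz gradient. Let $x^*$ be the minimizer of $f$ and let $x_c,\tilde x\in\mathbb{R}^d$ and $\alpha\in(0,1/L]$. Then the point $x^+=\tilde x-\alpha\nabla f(\tilde x)$ satisfies $\|x^+-x_c\|^2 \le (1-\alpha\mu)\|\tilde x - x_c\|^2 + \alpha L\|x_c - x^*\|^2$. -/

import Mathlib

open scoped RealInnerProductSpace

/-- Descent lemma: a Lipschitz-gradient bound implies the quadratic upper bound. -/
lemma descent_lemma_aux {d : ℕ}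
    (f : EuclideanSpace ℝ (Fin d) → ℝ)
    (g : EuclideanSpace ℝ (Fin d) → EuclideanSpace ℝ (Fin d))
    (L : ℝ) (hL : 0 < L)
    (hgrad : ∀ x, HasGradientAt f (g x) x)
    (hlip : ∀ x y, ‖g x - g y‖ ≤ L * ‖x - y‖)
    (x y : EuclideanSpace ℝ (Fin d)) :
    f y ≤ f x + ⟪g x, y - x⟫ + L / 2 * ‖y - x‖ ^ 2 := by
  set v := y - x with hv
  -- the path t ↦ x + t • v
  have hline : ∀ t : ℝ, HasDerivAt (fun t : ℝ => x + t • v) v t := by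
    intro t
    simpa using (((hasDerivAt_id t).smul_const v).const_add x)
  have hφ : ∀ t : ℝ, HasDerivAt (fun t : ℝ => f (x + t • v)) ⟪g (x + t • v), v⟫ t := by
    intro t
    have hF := (hasGradientAt_iff_hasFDerivAt.mp (hgrad (x + t • v)))
    have := hF.comp_hasDerivAt t (hline t)
    simp at this; exact this
  -- auxiliary function ψ
  set ψ : ℝ → ℝ := fun t => f x + t * ⟪g x, v⟫ + L / 2 * t ^ 2 * ‖v‖ ^ 2 - f (x + t • v) with hψ
  have hψ' : ∀ t : ℝ, HasDerivAt ψ (⟪g x, v⟫ + L * t * ‖v‖ ^ 2 - ⟪g (x + t • v), v⟫) t := by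
    intro t
    have h1 : HasDerivAt (fun t : ℝ => f x + t * ⟪g x, v⟫ + L / 2 * t ^ 2 * ‖v‖ ^ 2)
        (⟪g x, v⟫ + L * t * ‖v‖ ^ 2) t := by
      have ha : HasDerivAt (fun t : ℝ => t * ⟪g x, v⟫) ⟪g x, v⟫ t := by
        simpa using (hasDerivAt_id t).mul_const ⟪g x, v⟫
      have hb : HasDerivAt (fun t : ℝ => L / 2 * t ^ 2 * ‖v‖ ^ 2)
          (L / 2 * (2 * t) * ‖v‖ ^ 2) t := by
        have : HasDerivAt (fun t : ℝ => t ^ 2) (2 * t) t := by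
          simpa using hasDerivAt_pow 2 t
        simpa [mul_comm, mul_assoc, mul_left_comm] using (this.const_mul (L / 2)).mul_const (‖v‖ ^ 2)
      have := (ha.const_add (f x)).add hb
      rw [show ⟪g x, v⟫ + L * t * ‖v‖ ^ 2 = ⟪g x, v⟫ + L / 2 * (2 * t) * ‖v‖ ^ 2 by ring]
      exact this
    exact h1.sub (hφ t)
  have hmono : MonotoneOn ψ (Set.Icc (0 : ℝ) 1) := by
    apply monotoneOn_of_deriv_nonneg (convex_Icc 0 1)
    · exact (fun t _ => ((hψ' t).continuousAt.continuousWithinAt))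
    · intro t ht
      exact ((hψ' t).differentiableAt).differentiableWithinAt
    · intro t ht
      rw [interior_Icc] at ht
      rw [(hψ' t).deriv]
      have hinner : ⟪g x, v⟫ - ⟪g (x + t • v), v⟫ = ⟪g x - g (x + t • v), v⟫ := by
        rw [inner_sub_left]
      have habs : |⟪g x - g (x + t • v), v⟫| ≤ ‖g x - g (x + t • v)‖ * ‖v‖ :=
        abs_real_inner_le_norm _ _
      have hlb : ‖g x - g (x + t • v)‖ ≤ L * (t * ‖v‖) := by
        have := hlip x (x + t • v)
        have he : ‖x - (x + t • v)‖ = t * ‖v‖ := by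
          rw [show x - (x + t • v) = -(t • v) by abel, norm_neg, norm_smul,
            Real.norm_eq_abs, abs_of_pos ht.1]
        rwa [he] at this
      have hvn : (0:ℝ) ≤ ‖v‖ := norm_nonneg _
      nlinarith [neg_abs_le ⟪g x - g (x + t • v), v⟫, habs,
        mul_le_mul_of_nonneg_right hlb hvn]
  have h01 := hmono (Set.mem_Icc.mpr ⟨le_refl 0, zero_le_one⟩)
    (Set.mem_Icc.mpr ⟨zero_le_one, le_refl 1⟩) zero_le_one
  have hy : x + (1:ℝ) • v = y := by rw [one_smul, hv]; abel
  simp only [hψ, hy, zero_smul, add_zero, one_pow, mul_one, one_mul] at h01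
  -- h01 : f x + 0 * ... - f x ≤ f x + ⟪g x, v⟫ + L/2 * ‖v‖^2 - f y
  nlinarith [h01]

/-- One gradient-descent step contraction: the descent inequality used in the
convergence proof. -/
theorem gradient_step_contraction {d : ℕ}
    (f : EuclideanSpace ℝ (Fin d) → ℝ)
    (g : EuclideanSpace ℝ (Fin d) → EuclideanSpace ℝ (Fin d))
    (μ L : ℝ) (hμ : 0 < μ) (hμL : μ ≤ L)
    (xstar : EuclideanSpace ℝ (Fin d))
    (hgrad : ∀ x, HasGradientAt f (g x) x)
    (hsc : ∀ x y, f y + ⟪g y, x - y⟫ + μ / 2 * ‖x - y‖ ^ 2 ≤ f x)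
    (hlip : ∀ x y, ‖g x - g y‖ ≤ L * ‖x - y‖)
    (hmin : ∀ x, f xstar ≤ f x)
    (α : ℝ) (hα1 : 0 < α) (hα2 : α ≤ 1 / L)
    (xc xt : EuclideanSpace ℝ (Fin d)) :
    ‖(xt - α • g xt) - xc‖ ^ 2
      ≤ (1 - α * μ) * ‖xt - xc‖ ^ 2 + α * L * ‖xc - xstar‖ ^ 2 := by
  have hL : 0 < L := lt_of_lt_of_le hμ hμL
  have key := descent_lemma_aux f g L hL hgrad hlip
  -- g xstar = 0
  have gz : g xstar = 0 := by
    have h := key xstar (xstar - (1 / L) • g xstar)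
    have hmin' := hmin (xstar - (1 / L) • g xstar)
    have he : xstar - (1 / L) • g xstar - xstar = -((1 / L) • g xstar) := by abel
    rw [he] at h
    have hi : ⟪g xstar, -((1 / L) • g xstar)⟫ = -(1 / L) * ‖g xstar‖ ^ 2 := by
      rw [inner_neg_right, real_inner_smul_right, real_inner_self_eq_norm_sq]; ring
    have hn : ‖-((1 / L) • g xstar)‖ ^ 2 = (1 / L) ^ 2 * ‖g xstar‖ ^ 2 := by
      rw [norm_neg, norm_smul, Real.norm_eq_abs, mul_pow, sq_abs]
    rw [hi, hn] at h
    have hG : ‖g xstar‖ ^ 2 ≤ 0 := by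
      have hL2 : (0:ℝ) < L ^ 2 := by positivity
      rw [div_pow, one_pow] at h
      have h4 := hmin'.trans h
      have hLne : L ≠ 0 := hL.ne'
      field_simp at h4
      nlinarith [h4, hL, mul_pos hL hL]
    have : ‖g xstar‖ = 0 := by nlinarith [sq_nonneg ‖g xstar‖, norm_nonneg (g xstar)]
    exact norm_eq_zero.mp this
  -- PL-type inequality
  have pl : ‖g xt‖ ^ 2 ≤ 2 * L * (f xt - f xstar) := by
    have h := key xt (xt - (1 / L) • g xt)
    have hmin' := hmin (xt - (1 / L) • g xt)
    have he : xt - (1 / L) • g xt - xt = -((1 / L) • g xt) := by abel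
    rw [he] at h
    have hi : ⟪g xt, -((1 / L) • g xt)⟫ = -(1 / L) * ‖g xt‖ ^ 2 := by
      rw [inner_neg_right, real_inner_smul_right, real_inner_self_eq_norm_sq]; ring
    have hn : ‖-((1 / L) • g xt)‖ ^ 2 = (1 / L) ^ 2 * ‖g xt‖ ^ 2 := by
      rw [norm_neg, norm_smul, Real.norm_eq_abs, mul_pow, sq_abs]
    rw [hi, hn] at h
    rw [div_pow, one_pow] at h
    have h4 := hmin'.trans h
    have hLne : L ≠ 0 := hL.ne'
    field_simp at h4
    nlinarith [h4, hL, mul_pos hL hL]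
  -- f xc - f xstar ≤ L/2 ‖xc - xstar‖^2
  have fcb : f xc - f xstar ≤ L / 2 * ‖xc - xstar‖ ^ 2 := by
    have h := key xstar xc
    rw [gz] at h
    simp only [inner_zero_left, add_zero] at h
    linarith
  -- strong convexity at xt evaluated at xc
  have sc := hsc xc xt
  -- expansion of the squared norm
  have hexp : ‖(xt - α • g xt) - xc‖ ^ 2
      = ‖xt - xc‖ ^ 2 - 2 * (α * ⟪g xt, xt - xc⟫) + α ^ 2 * ‖g xt‖ ^ 2 := by
    have h1 : (xt - α • g xt) - xc = (xt - xc) - α • g xt := by abel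
    rw [h1, norm_sub_sq_real, real_inner_smul_right, norm_smul, Real.norm_eq_abs,
      mul_pow, sq_abs, real_inner_comm]
  rw [hexp]
  have hI : ⟪g xt, xc - xt⟫ = -⟪g xt, xt - xc⟫ := by
    rw [show xc - xt = -(xt - xc) by abel, inner_neg_right]
  rw [hI, norm_sub_rev xc xt] at sc
  -- α * L ≤ 1
  have hαL : α * L ≤ 1 := (le_div_iff₀ hL).mp hα2
  -- α^2 ‖g xt‖^2 ≤ 2 α (f xt - f xstar)
  have e1 : α ^ 2 * ‖g xt‖ ^ 2 ≤ 2 * α * (f xt - f xstar) := by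
    have h2 : L * (α ^ 2 * ‖g xt‖ ^ 2) ≤ L * (2 * α * (f xt - f xstar)) := by
      nlinarith [mul_nonneg hα1.le (sq_nonneg ‖g xt‖),
        mul_nonneg (sub_nonneg.mpr hαL) (mul_nonneg hα1.le (sq_nonneg ‖g xt‖)),
        mul_le_mul_of_nonneg_left pl hα1.le]
    exact le_of_mul_le_mul_left h2 hL
  nlinarith [mul_le_mul_of_nonneg_left fcb (mul_pos hα1 hL).le,
    mul_le_mul_of_nonneg_left sc hα1.le]
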